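/- Let n ≥ 2 and d = n(n−1)/2. Let f̃ : ℝ^{n×n} → ℝ be continuously differentiable, positive, and spectral (f̃(QZQᵀ) = f̃(Z) for every Q ∈ O(n) and every Z ∈ ℝ^{n×n}), with ∫_{SO(n)} f̃ dμ = 1. Fix R ∈ SO(n) and the score map G(Z) = (1/f̃(Z))·skew((∇f̃(Z))ᵀZ). For 1 ≤ p < q ≤ n define h_{pq}(Z) = ⟨G(Z), R·E_{pq}·Rᵀ⟩, where E_{pq} is the n×n matrix with (p,q) entry 1/√2, (q,p) entry −1/√2 and zeros elsewhere. Then for all index pairs (p,q) and (r,s) with p<q and r<s: ∫_{SO(n)} h_{pq}(Z)·h_{rs}(Z)·f̃(Z) dμ(Z) equals (1/d)·∫_{SO(n)} ‖G(Z)‖_F² f̃(Z) dμ(Z) if (p,q) = (r,s), and equals 0 otherwise, where ‖·‖_F is the Frobenius norm. -/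

import Mathlib

open Matrix MeasureTheory Real
open scoped ENNReal

noncomputable section

attribute [local instance] Matrix.normedAddCommGroup Matrix.normedSpace

/-- The special orthogonal group `SO(n)`, as a set of `n × n` real matrices. -/
def SO (n : ℕ) : Set (Matrix (Fin n) (Fin n) ℝ) :=
  {A | A * Aᵀ = 1 ∧ A.det = 1}

/-- The orthogonal group `O(n)`, as a set of `n × n` real matrices. -/
def ON (n : ℕ) : Set (Matrix (Fin n) (Fin n) ℝ) :=
  {A | A * Aᵀ = 1}

instance {n : ℕ} : MeasurableSpace (Matrix (Fin n) (Fin n) ℝ) :=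
  (inferInstance : MeasurableSpace (Fin n → Fin n → ℝ))

/-- `μ` is the Haar probability measure of `SO(n)`. -/
def IsHaarSO (n : ℕ) (μ : Measure (Matrix (Fin n) (Fin n) ℝ)) : Prop :=
  IsProbabilityMeasure μ ∧ μ (SO n)ᶜ = 0 ∧
    (∀ g ∈ SO n, Measure.map (fun Z => g * Z) μ = μ) ∧
    (∀ g ∈ SO n, Measure.map (fun Z => Z * g) μ = μ)

/-- The skew-symmetric part `(A - Aᵀ)/2` of a square matrix. -/
def skewPart {n : ℕ} (A : Matrix (Fin n) (Fin n) ℝ) : Matrix (Fin n) (Fin n) ℝ :=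
  (2 : ℝ)⁻¹ • (A - Aᵀ)

/-- The Frobenius inner product `⟨A, B⟩ = trace(Aᵀ B)`. -/
def frobInner {n : ℕ} (A B : Matrix (Fin n) (Fin n) ℝ) : ℝ :=
  (Aᵀ * B).trace

/-- The Euclidean (Frobenius) gradient of `f : ℝ^{n×n} → ℝ`. -/
def grad {n : ℕ} (f : Matrix (Fin n) (Fin n) ℝ → ℝ) (Z : Matrix (Fin n) (Fin n) ℝ) :
    Matrix (Fin n) (Fin n) ℝ :=
  Matrix.of fun i j => fderiv ℝ f Z (Matrix.single i j 1)

/-- The score map `G(Z) = (1 / f(Z)) · skew((∇f(Z))ᵀ Z)`. -/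
def scoreG {n : ℕ} (f : Matrix (Fin n) (Fin n) ℝ → ℝ) (Z : Matrix (Fin n) (Fin n) ℝ) :
    Matrix (Fin n) (Fin n) ℝ :=
  (f Z)⁻¹ • skewPart ((grad f Z)ᵀ * Z)

/-- The elementary skew-symmetric matrix `E_{pq}` with `(p,q)` entry `1/√2`, `(q,p)` entry
`-1/√2` and zeros elsewhere. -/
def Ebasis {n : ℕ} (p q : Fin n) : Matrix (Fin n) (Fin n) ℝ :=
  (Real.sqrt 2)⁻¹ • (Matrix.single p q 1 - Matrix.single q p 1)

/-- `h_{pq}(Z) = ⟨G(Z), R · E_{pq} · Rᵀ⟩`. -/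
def hFun {n : ℕ} (f : Matrix (Fin n) (Fin n) ℝ → ℝ) (R : Matrix (Fin n) (Fin n) ℝ)
    (p q : Fin n) (Z : Matrix (Fin n) (Fin n) ℝ) : ℝ :=
  frobInner (scoreG f Z) (R * Ebasis p q * Rᵀ)

variable {n : ℕ}

lemma ON.tmul {Q : Matrix (Fin n) (Fin n) ℝ} (h : Q ∈ ON n) : Qᵀ * Q = 1 := by
  rw [mul_eq_one_comm]; exact h

lemma ON.transpose_mem {Q : Matrix (Fin n) (Fin n) ℝ} (h : Q ∈ ON n) : Qᵀ ∈ ON n := by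
  simpa [ON, Matrix.transpose_transpose] using ON.tmul h

lemma frobInner_eq_sum (A B : Matrix (Fin n) (Fin n) ℝ) :
    frobInner A B = ∑ i, ∑ j, A i j * B i j := by
  simp [frobInner, Matrix.trace, Matrix.mul_apply, Matrix.diag]
  rw [Finset.sum_comm]

lemma frobInner_conj_right (A B Q : Matrix (Fin n) (Fin n) ℝ) :
    frobInner A (Q * B * Qᵀ) = frobInner (Qᵀ * A * Q) B := by
  simp only [frobInner, Matrix.transpose_mul, Matrix.transpose_transpose]
  rw [show Aᵀ * (Q * B * Qᵀ) = (Aᵀ * Q * B) * Qᵀ by noncomm_ring,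
      Matrix.trace_mul_comm]
  congr 1
  noncomm_ring

lemma frobInner_conj {Q : Matrix (Fin n) (Fin n) ℝ} (hQ : Q ∈ ON n)
    (A B : Matrix (Fin n) (Fin n) ℝ) :
    frobInner (Q * A * Qᵀ) (Q * B * Qᵀ) = frobInner A B := by
  rw [frobInner_conj_right]
  have : Qᵀ * (Q * A * Qᵀ) * Q = A := by
    rw [show Qᵀ * (Q * A * Qᵀ) * Q = (Qᵀ * Q) * A * (Qᵀ * Q) by noncomm_ring, ON.tmul hQ]
    simp
  rw [this]

lemma frobInner_stdBasis (A : Matrix (Fin n) (Fin n) ℝ) (i j : Fin n) :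
    frobInner A (Matrix.single i j 1) = A i j := by
  rw [frobInner_eq_sum]
  simp only [Matrix.single, Matrix.of_apply, mul_ite, mul_one, mul_zero]
  rw [Finset.sum_eq_single i]
  · rw [Finset.sum_eq_single j] <;> aesop
  · intro b _ hb
    apply Finset.sum_eq_zero; aesop
  · simp


/-- Conjugation `Z ↦ Q Z Qᵀ` as a continuous linear map. -/
def conjCLM (Q : Matrix (Fin n) (Fin n) ℝ) :
    Matrix (Fin n) (Fin n) ℝ →L[ℝ] Matrix (Fin n) (Fin n) ℝ :=
  LinearMap.toContinuousLinearMap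
    { toFun := fun Z => Q * Z * Qᵀ
      map_add' := by intro x y; noncomm_ring
      map_smul' := by intro c x; simp [Matrix.mul_smul, Matrix.smul_mul] }

@[simp] lemma conjCLM_apply (Q Z : Matrix (Fin n) (Fin n) ℝ) : conjCLM Q Z = Q * Z * Qᵀ := rfl

lemma clm_eq_frobInner_grad (f : Matrix (Fin n) (Fin n) ℝ → ℝ) (Z M : Matrix (Fin n) (Fin n) ℝ) :
    fderiv ℝ f Z M = frobInner (grad f Z) M := by
  have hM : M = ∑ i : Fin n, ∑ j : Fin n, (M i j) • Matrix.single i j (1:ℝ) := by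
    conv_lhs => rw [Matrix.matrix_eq_sum_single M]
    refine Finset.sum_congr rfl fun i _ => Finset.sum_congr rfl fun j _ => ?_
    rw [Matrix.smul_single, smul_eq_mul, mul_one]
  conv_lhs => rw [hM]
  rw [map_sum]
  rw [frobInner_eq_sum]
  refine Finset.sum_congr rfl fun i _ => ?_
  rw [map_sum]
  refine Finset.sum_congr rfl fun j _ => ?_
  rw [(fderiv ℝ f Z).map_smul]
  simp [grad, mul_comm]

lemma grad_conj {f : Matrix (Fin n) (Fin n) ℝ → ℝ} (hf : ContDiff ℝ 1 f)
    {Q : Matrix (Fin n) (Fin n) ℝ} (hQ : Q ∈ ON n)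
    (hspec : ∀ Z, f (Q * Z * Qᵀ) = f Z) (Z : Matrix (Fin n) (Fin n) ℝ) :
    grad f Z = Qᵀ * grad f (Q * Z * Qᵀ) * Q := by
  have hdf : Differentiable ℝ f := hf.differentiable one_ne_zero
  have hcomp : f = f ∘ (conjCLM Q) := by
    ext W; simp [hspec W]
  ext i j
  have h1 : fderiv ℝ f Z (Matrix.single i j 1)
      = fderiv ℝ f (Q * Z * Qᵀ) (Q * Matrix.single i j 1 * Qᵀ) := by
    conv_lhs => rw [hcomp]
    erw [fderiv_comp (x := Z) (hdf _) (conjCLM Q).differentiableAt]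
    erw [ContinuousLinearMap.comp_apply, ContinuousLinearMap.fderiv]; rfl
  have h2 : fderiv ℝ f (Q * Z * Qᵀ) (Q * Matrix.single i j 1 * Qᵀ)
      = (Qᵀ * grad f (Q * Z * Qᵀ) * Q) i j := by
    rw [clm_eq_frobInner_grad, frobInner_conj_right, frobInner_stdBasis]
  show grad f Z i j = _
  rw [grad, Matrix.of_apply, h1, h2]


lemma skewPart_conj {Q : Matrix (Fin n) (Fin n) ℝ} (A : Matrix (Fin n) (Fin n) ℝ) :
    skewPart (Q * A * Qᵀ) = Q * skewPart A * Qᵀ := by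
  simp only [skewPart, Matrix.transpose_mul, Matrix.transpose_transpose,
    Matrix.mul_smul, Matrix.smul_mul, Matrix.mul_sub, Matrix.sub_mul]
  rw [mul_assoc, mul_assoc]

lemma grad_conj' {f : Matrix (Fin n) (Fin n) ℝ → ℝ} (hf : ContDiff ℝ 1 f)
    {Q : Matrix (Fin n) (Fin n) ℝ} (hQ : Q ∈ ON n)
    (hspec : ∀ Z, f (Q * Z * Qᵀ) = f Z) (Z : Matrix (Fin n) (Fin n) ℝ) :
    grad f (Q * Z * Qᵀ) = Q * grad f Z * Qᵀ := by
  rw [grad_conj hf hQ hspec Z]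
  rw [show Q * (Qᵀ * grad f (Q * Z * Qᵀ) * Q) * Qᵀ
      = (Q * Qᵀ) * grad f (Q * Z * Qᵀ) * (Q * Qᵀ) by noncomm_ring, hQ]
  simp

lemma scoreG_conj {f : Matrix (Fin n) (Fin n) ℝ → ℝ} (hf : ContDiff ℝ 1 f)
    {Q : Matrix (Fin n) (Fin n) ℝ} (hQ : Q ∈ ON n)
    (hspec : ∀ Z, f (Q * Z * Qᵀ) = f Z) (Z : Matrix (Fin n) (Fin n) ℝ) :
    scoreG f (Q * Z * Qᵀ) = Q * scoreG f Z * Qᵀ := by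
  rw [scoreG, scoreG, grad_conj' hf hQ hspec, hspec]
  have : (Q * grad f Z * Qᵀ)ᵀ * (Q * Z * Qᵀ) = Q * ((grad f Z)ᵀ * Z) * Qᵀ := by
    simp only [Matrix.transpose_mul, Matrix.transpose_transpose]
    rw [show Q * ((grad f Z)ᵀ * Qᵀ) * (Q * Z * Qᵀ)
        = Q * (grad f Z)ᵀ * (Qᵀ * Q) * Z * Qᵀ by noncomm_ring, ON.tmul hQ]
    noncomm_ring
  rw [this, skewPart_conj, Matrix.mul_smul, Matrix.smul_mul]


instance {n : ℕ} : BorelSpace (Matrix (Fin n) (Fin n) ℝ) :=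
  (inferInstance : BorelSpace (Fin n → Fin n → ℝ))

instance {n : ℕ} : SecondCountableTopology (Matrix (Fin n) (Fin n) ℝ) :=
  (inferInstance : SecondCountableTopology (Fin n → Fin n → ℝ))

lemma measurableSet_SO : MeasurableSet (SO n) := by
  have h1 : IsClosed {A : Matrix (Fin n) (Fin n) ℝ | A * Aᵀ = 1} :=
    isClosed_eq (continuous_id.matrix_mul continuous_id.matrix_transpose) continuous_const
  have h2 : IsClosed {A : Matrix (Fin n) (Fin n) ℝ | A.det = 1} :=
    isClosed_eq continuous_id.matrix_det continuous_const
  exact (h1.inter h2).measurableSet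

lemma SO_subset_ON : SO n ⊆ ON n := fun A hA => hA.1

lemma conj_mem_SO {Q : Matrix (Fin n) (Fin n) ℝ} (hQ : Q ∈ ON n)
    {Z : Matrix (Fin n) (Fin n) ℝ} (hZ : Z ∈ SO n) : Q * Z * Qᵀ ∈ SO n := by
  obtain ⟨hZ1, hZ2⟩ := hZ
  constructor
  · rw [show (Q * Z * Qᵀ) * (Q * Z * Qᵀ)ᵀ = Q * (Z * (Qᵀ * Q) * Zᵀ) * Qᵀ by
      simp only [Matrix.transpose_mul, Matrix.transpose_transpose]; noncomm_ring,
      ON.tmul hQ]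
    rw [Matrix.mul_one, hZ1, Matrix.mul_one]; exact hQ
  · have hdet : Q.det * Q.det = 1 := by
      have := congrArg Matrix.det hQ
      simpa [Matrix.det_mul, Matrix.det_transpose] using this
    simp [Matrix.det_mul, Matrix.det_transpose, hZ2]
    rw [mul_comm] at hdet ⊢
    simpa using hdet

lemma conj_measurable (Q : Matrix (Fin n) (Fin n) ℝ) :
    Measurable (fun Z : Matrix (Fin n) (Fin n) ℝ => Q * Z * Qᵀ) :=
  ((continuous_const.matrix_mul continuous_id).matrix_mul continuous_const).measurable

lemma mulLeft_measurable (g : Matrix (Fin n) (Fin n) ℝ) :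
    Measurable (fun Z : Matrix (Fin n) (Fin n) ℝ => g * Z) :=
  (continuous_const.matrix_mul continuous_id).measurable

lemma mulRight_measurable (g : Matrix (Fin n) (Fin n) ℝ) :
    Measurable (fun Z : Matrix (Fin n) (Fin n) ℝ => Z * g) :=
  (continuous_id.matrix_mul continuous_const).measurable

/-- Uniqueness: two Haar probability measures on SO(n) agree. -/
lemma haar_unique {μ ν : Measure (Matrix (Fin n) (Fin n) ℝ)}
    (hμ : IsHaarSO n μ) (hν : IsHaarSO n ν) : μ = ν := by
  obtain ⟨hμp, hμ0, hμl, hμr⟩ := hμ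
  obtain ⟨hνp, hν0, hνl, hνr⟩ := hν
  ext s hs
  have hmeas : Measurable (fun p : (Matrix (Fin n) (Fin n) ℝ) × (Matrix (Fin n) (Fin n) ℝ) =>
      s.indicator (fun _ => (1 : ℝ≥0∞)) (p.1 * p.2)) :=
    (measurable_const.indicator hs).comp
      (continuous_fst.matrix_mul continuous_snd).measurable
  have key : ∫⁻ x, ∫⁻ y, s.indicator (fun _ => (1 : ℝ≥0∞)) (x * y) ∂μ ∂ν
      = ∫⁻ y, ∫⁻ x, s.indicator (fun _ => (1 : ℝ≥0∞)) (x * y) ∂ν ∂μ :=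
    lintegral_lintegral_swap hmeas.aemeasurable
  have hL : ∫⁻ x, ∫⁻ y, s.indicator (fun _ => (1 : ℝ≥0∞)) (x * y) ∂μ ∂ν = μ s := by
    have h1 : ∀ᵐ x ∂ν, (∫⁻ y, s.indicator (fun _ => (1 : ℝ≥0∞)) (x * y) ∂μ) = μ s := by
      rw [MeasureTheory.ae_iff]
      refine measure_mono_null ?_ hν0
      intro x hx
      simp only [Set.mem_setOf_eq] at hx
      intro hxSO
      apply hx
      have : ∫⁻ y, s.indicator (fun _ => (1 : ℝ≥0∞)) (x * y) ∂μ
          = ∫⁻ z, s.indicator (fun _ => (1 : ℝ≥0∞)) z ∂(μ.map (fun Z => x * Z)) := by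
        rw [lintegral_map (measurable_const.indicator hs) (mulLeft_measurable x)]
      rw [this, hμl x hxSO, lintegral_indicator hs]
      simp
    rw [lintegral_congr_ae h1, lintegral_const]
    simp [hνp.measure_univ]
  have hR : ∫⁻ y, ∫⁻ x, s.indicator (fun _ => (1 : ℝ≥0∞)) (x * y) ∂ν ∂μ = ν s := by
    have h1 : ∀ᵐ y ∂μ, (∫⁻ x, s.indicator (fun _ => (1 : ℝ≥0∞)) (x * y) ∂ν) = ν s := by
      rw [MeasureTheory.ae_iff]
      refine measure_mono_null ?_ hμ0
      intro y hy
      simp only [Set.mem_setOf_eq] at hy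
      intro hySO
      apply hy
      have : ∫⁻ x, s.indicator (fun _ => (1 : ℝ≥0∞)) (x * y) ∂ν
          = ∫⁻ z, s.indicator (fun _ => (1 : ℝ≥0∞)) z ∂(ν.map (fun Z => Z * y)) := by
        rw [lintegral_map (measurable_const.indicator hs) (mulRight_measurable y)]
      rw [this, hνr y hySO, lintegral_indicator hs]
      simp
    rw [lintegral_congr_ae h1, lintegral_const]
    simp [hμp.measure_univ]
  rw [← hL, key, hR]

lemma haar_conj {μ : Measure (Matrix (Fin n) (Fin n) ℝ)} (hμ : IsHaarSO n μ)
    {Q : Matrix (Fin n) (Fin n) ℝ} (hQ : Q ∈ ON n) :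
    μ.map (fun Z => Q * Z * Qᵀ) = μ := by
  obtain ⟨hμp, hμ0, hμl, hμr⟩ := hμ
  set φ := fun Z : Matrix (Fin n) (Fin n) ℝ => Q * Z * Qᵀ with hφ
  have hφm : Measurable φ := conj_measurable Q
  refine haar_unique ?_ ⟨hμp, hμ0, hμl, hμr⟩
  refine ⟨Measure.isProbabilityMeasure_map hφm.aemeasurable, ?_, ?_, ?_⟩
  · rw [Measure.map_apply hφm measurableSet_SO.compl]
    refine measure_mono_null ?_ hμ0
    intro Z hZ
    simp only [Set.mem_preimage, Set.mem_compl_iff] at hZ ⊢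
    exact fun h => hZ (conj_mem_SO hQ h)
  · intro g hg
    have hh : Qᵀ * g * Q ∈ SO n := by
      have := conj_mem_SO (ON.transpose_mem hQ) hg
      simpa using this
    rw [Measure.map_map (mulLeft_measurable g) hφm]
    have : (fun Z => g * Z) ∘ φ = φ ∘ (fun Z => (Qᵀ * g * Q) * Z) := by
      funext Z
      simp only [Function.comp, hφ]
      rw [show Q * (Qᵀ * g * Q * Z) * Qᵀ = (Q * Qᵀ) * g * (Q * Z * Qᵀ) by noncomm_ring, hQ]
      noncomm_ring
    rw [this, ← Measure.map_map hφm (mulLeft_measurable _), hμl _ hh]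
  · intro g hg
    have hh : Qᵀ * g * Q ∈ SO n := by
      have := conj_mem_SO (ON.transpose_mem hQ) hg
      simpa using this
    rw [Measure.map_map (mulRight_measurable g) hφm]
    have : (fun Z => Z * g) ∘ φ = φ ∘ (fun Z => Z * (Qᵀ * g * Q)) := by
      funext Z
      simp only [Function.comp, hφ]
      rw [show Q * (Z * (Qᵀ * g * Q)) * Qᵀ = (Q * Z * Qᵀ) * g * (Q * Qᵀ) by noncomm_ring, hQ]
      noncomm_ring
    rw [this, ← Measure.map_map hφm (mulRight_measurable _), hμr _ hh]

lemma continuous_grad {f : Matrix (Fin n) (Fin n) ℝ → ℝ} (hf : ContDiff ℝ 1 f) :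
    Continuous fun Z => grad f Z := by
  apply continuous_matrix
  intro i j
  exact (hf.continuous_fderiv one_ne_zero).clm_apply continuous_const

lemma continuous_frobInner {α : Type*} [TopologicalSpace α]
    {A B : α → Matrix (Fin n) (Fin n) ℝ} (hA : Continuous A) (hB : Continuous B) :
    Continuous fun x => frobInner (A x) (B x) := by
  simp only [frobInner_eq_sum]
  refine continuous_finset_sum _ fun i _ => continuous_finset_sum _ fun j _ => ?_
  exact ((continuous_apply _).comp ((continuous_apply _).comp hA)).mul
    ((continuous_apply _).comp ((continuous_apply _).comp hB))

lemma continuous_scoreG {f : Matrix (Fin n) (Fin n) ℝ → ℝ} (hf : ContDiff ℝ 1 f)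
    (hpos : ∀ Z, 0 < f Z) : Continuous fun Z => scoreG f Z := by
  have h1 : Continuous fun Z : Matrix (Fin n) (Fin n) ℝ => (f Z)⁻¹ :=
    (hf.continuous).inv₀ fun Z => (hpos Z).ne'
  have h2 : Continuous fun Z => skewPart ((grad f Z)ᵀ * Z) := by
    unfold skewPart
    exact (((continuous_grad hf).matrix_transpose.matrix_mul continuous_id).sub
      ((continuous_grad hf).matrix_transpose.matrix_mul continuous_id).matrix_transpose).const_smul ((2:ℝ)⁻¹)
  exact h1.smul h2

lemma isCompact_SO : IsCompact (SO n) := by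
  have hclosed : IsClosed (SO n) := by
    have h1 : IsClosed {A : Matrix (Fin n) (Fin n) ℝ | A * Aᵀ = 1} :=
      isClosed_eq (continuous_id.matrix_mul continuous_id.matrix_transpose) continuous_const
    have h2 : IsClosed {A : Matrix (Fin n) (Fin n) ℝ | A.det = 1} :=
      isClosed_eq continuous_id.matrix_det continuous_const
    exact h1.inter h2
  have hbdd : Bornology.IsBounded (SO n) := by
    refine isBounded_iff_forall_norm_le.2 ⟨1, fun Z hZ => ?_⟩
    rw [Matrix.norm_le_iff (by norm_num)]
    intro i j
    have hrow : ∑ k, Z i k * Z i k = 1 := by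
      have := congrFun (congrFun hZ.1 i) i
      simpa [Matrix.mul_apply, Matrix.one_apply] using this
    have h1 : Z i j * Z i j ≤ 1 := by
      rw [← hrow]
      exact Finset.single_le_sum (fun k _ => mul_self_nonneg (Z i k)) (Finset.mem_univ j)
    rw [Real.norm_eq_abs, abs_le]
    constructor <;> nlinarith
  exact Metric.isCompact_of_isClosed_isBounded hclosed hbdd

lemma integrable_of_continuous {μ : Measure (Matrix (Fin n) (Fin n) ℝ)} (hμ : IsHaarSO n μ)
    {F : Matrix (Fin n) (Fin n) ℝ → ℝ} (hF : Continuous F) : Integrable F μ := by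
  obtain ⟨hμp, hμ0, -, -⟩ := hμ
  obtain ⟨C, hC⟩ := isCompact_SO.exists_bound_of_continuousOn hF.continuousOn
  refine ⟨hF.aestronglyMeasurable, ?_⟩
  apply MeasureTheory.HasFiniteIntegral.of_bounded (C := C)
  rw [MeasureTheory.ae_iff]
  refine measure_mono_null ?_ hμ0
  intro Z hZ
  simp only [Set.mem_setOf_eq, not_le] at hZ
  intro hZSO
  exact absurd (hC Z hZSO) (not_le.2 hZ)

lemma frobInner_comm (A B : Matrix (Fin n) (Fin n) ℝ) : frobInner A B = frobInner B A := by
  simp only [frobInner_eq_sum]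
  exact Finset.sum_congr rfl fun i _ => Finset.sum_congr rfl fun j _ => mul_comm _ _

lemma frobInner_conj_left (A B Q : Matrix (Fin n) (Fin n) ℝ) :
    frobInner (Q * A * Qᵀ) B = frobInner A (Qᵀ * B * Q) := by
  rw [frobInner_comm, frobInner_conj_right, frobInner_comm]

lemma frobInner_smul_right (c : ℝ) (A B : Matrix (Fin n) (Fin n) ℝ) :
    frobInner A (c • B) = c * frobInner A B := by
  simp only [frobInner_eq_sum, Matrix.smul_apply, smul_eq_mul, Finset.mul_sum]
  exact Finset.sum_congr rfl fun i _ => Finset.sum_congr rfl fun j _ => by ring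

lemma T_conj {μ : Measure (Matrix (Fin n) (Fin n) ℝ)} (hμ : IsHaarSO n μ)
    {f : Matrix (Fin n) (Fin n) ℝ → ℝ} (hf : ContDiff ℝ 1 f) (hpos : ∀ Z, 0 < f Z)
    (hspec : ∀ Q ∈ ON n, ∀ Z, f (Q * Z * Qᵀ) = f Z)
    {Q : Matrix (Fin n) (Fin n) ℝ} (hQ : Q ∈ ON n) (A B : Matrix (Fin n) (Fin n) ℝ) :
    ∫ Z, frobInner (scoreG f Z) A * frobInner (scoreG f Z) B * f Z ∂μ
      = ∫ Z, frobInner (scoreG f Z) (Qᵀ * A * Q) * frobInner (scoreG f Z) (Qᵀ * B * Q) * f Z ∂μ := by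
  have hcont : Continuous fun Z => frobInner (scoreG f Z) A * frobInner (scoreG f Z) B * f Z :=
    ((continuous_frobInner (continuous_scoreG hf hpos) continuous_const).mul
      (continuous_frobInner (continuous_scoreG hf hpos) continuous_const)).mul hf.continuous
  conv_lhs => rw [← haar_conj hμ hQ,
    integral_map (conj_measurable Q).aemeasurable hcont.aestronglyMeasurable]
  refine integral_congr_ae (Filter.Eventually.of_forall fun Z => ?_)
  simp only
  rw [scoreG_conj hf hQ (hspec Q hQ), hspec Q hQ,
    frobInner_conj_left, frobInner_conj_left]

lemma T_conj' {μ : Measure (Matrix (Fin n) (Fin n) ℝ)} (hμ : IsHaarSO n μ)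
    {f : Matrix (Fin n) (Fin n) ℝ → ℝ} (hf : ContDiff ℝ 1 f) (hpos : ∀ Z, 0 < f Z)
    (hspec : ∀ Q ∈ ON n, ∀ Z, f (Q * Z * Qᵀ) = f Z)
    {Q : Matrix (Fin n) (Fin n) ℝ} (hQ : Q ∈ ON n) (A B : Matrix (Fin n) (Fin n) ℝ) :
    ∫ Z, frobInner (scoreG f Z) (Q * A * Qᵀ) * frobInner (scoreG f Z) (Q * B * Qᵀ) * f Z ∂μ
      = ∫ Z, frobInner (scoreG f Z) A * frobInner (scoreG f Z) B * f Z ∂μ := by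
  rw [T_conj hμ hf hpos hspec hQ (Q * A * Qᵀ) (Q * B * Qᵀ)]
  have e : ∀ M : Matrix (Fin n) (Fin n) ℝ, Qᵀ * (Q * M * Qᵀ) * Q = M := fun M => by
    rw [show Qᵀ * (Q * M * Qᵀ) * Q = (Qᵀ * Q) * M * (Qᵀ * Q) by noncomm_ring, ON.tmul hQ]
    simp
  rw [e A, e B]


/-- diagonal sign matrix -/
lemma sign_mem_ON (ε : Fin n → ℝ) (hε : ∀ i, ε i = 1 ∨ ε i = -1) :
    Matrix.diagonal ε ∈ ON n := by
  show Matrix.diagonal ε * (Matrix.diagonal ε)ᵀ = 1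
  rw [Matrix.diagonal_transpose, Matrix.diagonal_mul_diagonal]
  ext i j
  by_cases hij : i = j
  · subst hij
    rcases hε i with h | h <;> simp [h]
  · simp [Matrix.diagonal_apply_ne _ hij, Matrix.one_apply_ne hij]

lemma sign_conj_std (ε : Fin n → ℝ) (a b : Fin n) :
    Matrix.diagonal ε * Matrix.single a b (1:ℝ) * (Matrix.diagonal ε)ᵀ
      = (ε a * ε b) • Matrix.single a b 1 := by
  rw [Matrix.diagonal_transpose]
  ext i j
  simp only [Matrix.diagonal_mul, Matrix.mul_diagonal, Matrix.smul_apply, smul_eq_mul,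
    Matrix.single, Matrix.of_apply]
  split_ifs with h
  · obtain ⟨h1, h2⟩ := h; subst h1; subst h2; ring
  · ring

lemma sign_conj_Ebasis (ε : Fin n → ℝ) (a b : Fin n) :
    Matrix.diagonal ε * Ebasis a b * (Matrix.diagonal ε)ᵀ = (ε a * ε b) • Ebasis a b := by
  simp only [Ebasis, Matrix.smul_mul, Matrix.mul_smul, Matrix.sub_mul, Matrix.mul_sub]
  rw [sign_conj_std, sign_conj_std]
  rw [show ε b * ε a = ε a * ε b from mul_comm _ _]
  rw [← smul_sub, smul_comm, smul_sub]

/-- permutation matrix -/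
def permMat (σ : Equiv.Perm (Fin n)) : Matrix (Fin n) (Fin n) ℝ :=
  σ.permMatrix ℝ

lemma permMat_conj (σ : Equiv.Perm (Fin n)) (M : Matrix (Fin n) (Fin n) ℝ) :
    permMat σ * M * (permMat σ)ᵀ = M.submatrix σ σ := by
  show σ.toPEquiv.toMatrix * M * (σ.toPEquiv.toMatrix)ᵀ = _
  rw [← PEquiv.toMatrix_symm, ← Equiv.toPEquiv_symm,
    PEquiv.toMatrix_toPEquiv_mul, PEquiv.mul_toMatrix_toPEquiv]
  ext i j
  simp [Matrix.submatrix_apply]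

lemma permMat_mem_ON (σ : Equiv.Perm (Fin n)) : permMat σ ∈ ON n := by
  show permMat σ * (permMat σ)ᵀ = 1
  have h := permMat_conj σ (1 : Matrix (Fin n) (Fin n) ℝ)
  rw [Matrix.mul_one] at h
  rw [h]
  ext i j
  simp [Matrix.submatrix_apply, Matrix.one_apply, Equiv.apply_eq_iff_eq]

lemma submatrix_stdBasis (σ : Equiv.Perm (Fin n)) (a b : Fin n) :
    (Matrix.single (σ a) (σ b) (1:ℝ)).submatrix σ σ = Matrix.single a b 1 := by
  ext i j
  simp only [Matrix.submatrix_apply, Matrix.single, Matrix.of_apply,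
    Equiv.apply_eq_iff_eq]

lemma permMat_conj_Ebasis (σ : Equiv.Perm (Fin n)) (a b : Fin n) :
    permMat σ * Ebasis (σ a) (σ b) * (permMat σ)ᵀ = Ebasis a b := by
  rw [permMat_conj]
  simp only [Ebasis]
  have : ∀ (c d : Fin n), ((Matrix.single (σ c) (σ d) (1:ℝ)).submatrix σ σ)
      = Matrix.single c d 1 := submatrix_stdBasis σ
  ext i j
  simp only [Matrix.submatrix_apply, Matrix.smul_apply, Matrix.sub_apply, smul_eq_mul,
    Matrix.single, Matrix.of_apply, Equiv.apply_eq_iff_eq]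

lemma scoreG_skew (f : Matrix (Fin n) (Fin n) ℝ → ℝ) (Z : Matrix (Fin n) (Fin n) ℝ) :
    (scoreG f Z)ᵀ = - scoreG f Z := by
  simp only [scoreG, skewPart, Matrix.transpose_smul, Matrix.transpose_sub,
    Matrix.transpose_transpose]
  rw [show (grad f Z)ᵀ * Z - ((grad f Z)ᵀ * Z)ᵀ
      = -((((grad f Z)ᵀ * Z)ᵀ) - (grad f Z)ᵀ * Z) by abel]
  simp only [smul_neg]
  rw [show ((grad f Z)ᵀ * Z)ᵀ - (grad f Z)ᵀ * Z = -((grad f Z)ᵀ * Z - ((grad f Z)ᵀ * Z)ᵀ) by abel]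
  simp

lemma frobInner_Ebasis_skew {S : Matrix (Fin n) (Fin n) ℝ} (hS : Sᵀ = -S) (a b : Fin n) :
    frobInner S (Ebasis a b) = (Real.sqrt 2)⁻¹ * (S a b - S b a) := by
  simp only [Ebasis, frobInner_smul_right]
  congr 1
  have h1 : frobInner S (Matrix.single a b 1 - Matrix.single b a 1)
      = frobInner S (Matrix.single a b 1) - frobInner S (Matrix.single b a 1) := by
    simp only [frobInner_eq_sum, Matrix.sub_apply, mul_sub, Finset.sum_sub_distrib]
  rw [h1, frobInner_stdBasis, frobInner_stdBasis]

/-- pointwise Parseval on skew matrices -/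
lemma sum_sq_frobInner_Ebasis {S : Matrix (Fin n) (Fin n) ℝ} (hS : Sᵀ = -S) :
    ∑ x ∈ Finset.univ.filter (fun x : Fin n × Fin n => x.1 < x.2),
        frobInner S (Ebasis x.1 x.2) * frobInner S (Ebasis x.1 x.2)
      = frobInner S S := by
  have hskew : ∀ i j, S j i = - S i j := fun i j => by
    have := congrFun (congrFun hS i) j
    simpa [Matrix.transpose_apply] using this
  have hdiag : ∀ i, S i i = 0 := fun i => by
    have := hskew i i; linarith
  have hterm : ∀ a b : Fin n, frobInner S (Ebasis a b) * frobInner S (Ebasis a b)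
      = 2 * (S a b * S a b) := by
    intro a b
    rw [frobInner_Ebasis_skew hS, hskew a b]
    have h2 : Real.sqrt 2 * Real.sqrt 2 = 2 := Real.mul_self_sqrt (by norm_num)
    have h3 : (Real.sqrt 2)⁻¹ * (Real.sqrt 2)⁻¹ = 2⁻¹ := by rw [← mul_inv, h2]
    rw [show ((Real.sqrt 2)⁻¹ * (S a b - -S a b)) * ((Real.sqrt 2)⁻¹ * (S a b - -S a b))
        = ((Real.sqrt 2)⁻¹ * (Real.sqrt 2)⁻¹) * (4 * (S a b * S a b)) by ring, h3]
    ring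
  rw [frobInner_eq_sum]
  rw [show (∑ i : Fin n, ∑ j : Fin n, S i j * S i j)
      = ∑ x : Fin n × Fin n, S x.1 x.2 * S x.1 x.2 from (Fintype.sum_prod_type (fun x : Fin n × Fin n => S x.1 x.2 * S x.1 x.2)).symm]
  rw [← Finset.sum_filter_add_sum_filter_not Finset.univ
    (fun x : Fin n × Fin n => x.1 < x.2) (fun x => S x.1 x.2 * S x.1 x.2)]
  rw [← Finset.sum_filter_add_sum_filter_not
    (Finset.univ.filter (fun x : Fin n × Fin n => ¬ x.1 < x.2))
    (fun x : Fin n × Fin n => x.2 < x.1) (fun x => S x.1 x.2 * S x.1 x.2)]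
  have hgt : ((Finset.univ.filter (fun x : Fin n × Fin n => ¬ x.1 < x.2)).filter
      (fun x : Fin n × Fin n => x.2 < x.1))
      = Finset.univ.filter (fun x : Fin n × Fin n => x.2 < x.1) := by
    rw [Finset.filter_filter]
    apply Finset.filter_congr
    intro x _
    constructor
    · exact fun h => h.2
    · exact fun h => ⟨not_lt.2 h.le, h⟩
  have hdiagsum : ∑ x ∈ (Finset.univ.filter (fun x : Fin n × Fin n => ¬ x.1 < x.2)).filter
      (fun x : Fin n × Fin n => ¬ x.2 < x.1), S x.1 x.2 * S x.1 x.2 = 0 := by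
    apply Finset.sum_eq_zero
    intro x hx
    simp only [Finset.mem_filter] at hx
    have : x.1 = x.2 := le_antisymm (not_lt.1 hx.2) (not_lt.1 hx.1.2)
    rw [← this, hdiag]
    ring
  have hswap : ∑ x ∈ Finset.univ.filter (fun x : Fin n × Fin n => x.2 < x.1),
      S x.1 x.2 * S x.1 x.2
      = ∑ x ∈ Finset.univ.filter (fun x : Fin n × Fin n => x.1 < x.2),
      S x.1 x.2 * S x.1 x.2 := by
    apply Finset.sum_nbij' (i := Prod.swap) (j := Prod.swap)
    · intro a ha; simp only [Finset.mem_filter, Finset.mem_univ, true_and] at ha ⊢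
      simpa using ha
    · intro a ha; simp only [Finset.mem_filter, Finset.mem_univ, true_and] at ha ⊢
      simpa using ha
    · intro a _; simp
    · intro a _; simp
    · intro x _
      simp only [Prod.snd_swap, Prod.fst_swap]
      rw [hskew x.2 x.1]
      ring
  rw [hgt, hdiagsum, hswap]
  rw [Finset.sum_congr rfl (fun x _ => hterm x.1 x.2)]
  rw [add_zero, ← Finset.sum_add_distrib]
  apply Finset.sum_congr rfl
  intro x _
  ring

lemma card_pairs : (Finset.univ.filter (fun x : Fin n × Fin n => x.1 < x.2)).card
    = n * (n - 1) / 2 := by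
  rw [Finset.card_filter, Fintype.sum_prod_type]
  have h1 : ∀ j : Fin n, (∑ i : Fin n, if i < j then 1 else 0) = (j : ℕ) := by
    intro j
    rw [← Finset.card_filter]
    have : Finset.univ.filter (fun i : Fin n => i < j) = Finset.Iio j := by
      ext i; simp
    rw [this, Fin.card_Iio]
  rw [Finset.sum_comm]
  rw [Finset.sum_congr rfl (fun j _ => h1 j)]
  rw [Fin.sum_univ_eq_sum_range (fun i => i) n]
  exact Finset.sum_range_id n

lemma cont_integrand {f : Matrix (Fin n) (Fin n) ℝ → ℝ} (hf : ContDiff ℝ 1 f)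
    (hpos : ∀ Z, 0 < f Z) (A B : Matrix (Fin n) (Fin n) ℝ) :
    Continuous fun Z => frobInner (scoreG f Z) A * frobInner (scoreG f Z) B * f Z :=
  ((continuous_frobInner (continuous_scoreG hf hpos) continuous_const).mul
    (continuous_frobInner (continuous_scoreG hf hpos) continuous_const)).mul hf.continuous

lemma T_offdiag {μ : Measure (Matrix (Fin n) (Fin n) ℝ)} (hμ : IsHaarSO n μ)
    {f : Matrix (Fin n) (Fin n) ℝ → ℝ} (hf : ContDiff ℝ 1 f) (hpos : ∀ Z, 0 < f Z)
    (hspec : ∀ Q ∈ ON n, ∀ Z, f (Q * Z * Qᵀ) = f Z)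
    {p q r s : Fin n} (hpq : p < q) (hrs : r < s) (hne : (p, q) ≠ (r, s)) :
    ∫ Z, frobInner (scoreG f Z) (Ebasis p q) * frobInner (scoreG f Z) (Ebasis r s) * f Z ∂μ
      = 0 := by
  -- pick an index in {p,q} avoiding {r,s}
  obtain ⟨a, ha, har, has⟩ : ∃ a : Fin n, (a = p ∨ a = q) ∧ a ≠ r ∧ a ≠ s := by
    by_cases h1 : p = r
    · subst h1
      have hqs : q ≠ s := fun h => hne (by rw [h])
      exact ⟨q, Or.inr rfl, hpq.ne', hqs⟩
    · by_cases h2 : p = s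
      · have hsq : s < q := lt_of_eq_of_lt h2.symm hpq
        have hrq : r < q := lt_trans hrs hsq
        have hqs : q ≠ s := hsq.ne'
        exact ⟨q, Or.inr rfl, hrq.ne', hqs⟩
      · exact ⟨p, Or.inl rfl, h1, h2⟩
  set ε : Fin n → ℝ := fun i => if i = a then (-1 : ℝ) else 1 with hεdef
  have hε : ∀ i, ε i = 1 ∨ ε i = -1 := fun i => by
    by_cases h : i = a <;> simp [hεdef, h]
  have hQ : Matrix.diagonal ε ∈ ON n := sign_mem_ON ε hε
  have hc1 : ε p * ε q = -1 := by
    rcases ha with h | h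
    · subst h
      have : q ≠ a := hpq.ne'
      simp [hεdef, this]
    · subst h
      have : p ≠ a := hpq.ne
      simp [hεdef, this]
  have hc2 : ε r * ε s = 1 := by
    have h1 : r ≠ a := fun h => har h.symm
    have h2 : s ≠ a := fun h => has h.symm
    simp [hεdef, h1, h2]
  have e1 : (Matrix.diagonal ε)ᵀ * Ebasis p q * Matrix.diagonal ε = (-1 : ℝ) • Ebasis p q := by
    have h := sign_conj_Ebasis ε p q
    rw [Matrix.diagonal_transpose] at h ⊢
    rw [h, hc1]
  have e2 : (Matrix.diagonal ε)ᵀ * Ebasis r s * Matrix.diagonal ε = Ebasis r s := by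
    have h := sign_conj_Ebasis ε r s
    rw [Matrix.diagonal_transpose] at h ⊢
    rw [h, hc2, one_smul]
  set I := ∫ Z, frobInner (scoreG f Z) (Ebasis p q) * frobInner (scoreG f Z) (Ebasis r s) * f Z ∂μ
    with hI
  have key : I = -I := by
    conv_lhs => rw [hI, T_conj hμ hf hpos hspec hQ (Ebasis p q) (Ebasis r s)]
    rw [e1, e2]
    have : (fun Z => frobInner (scoreG f Z) ((-1 : ℝ) • Ebasis p q)
        * frobInner (scoreG f Z) (Ebasis r s) * f Z)
        = fun Z => -(frobInner (scoreG f Z) (Ebasis p q)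
        * frobInner (scoreG f Z) (Ebasis r s) * f Z) := by
      funext Z
      rw [frobInner_smul_right]
      ring
    rw [this, integral_neg]
  linarith

lemma T_diag_eq {μ : Measure (Matrix (Fin n) (Fin n) ℝ)} (hμ : IsHaarSO n μ)
    {f : Matrix (Fin n) (Fin n) ℝ → ℝ} (hf : ContDiff ℝ 1 f) (hpos : ∀ Z, 0 < f Z)
    (hspec : ∀ Q ∈ ON n, ∀ Z, f (Q * Z * Qᵀ) = f Z)
    {p q r s : Fin n} (hpq : p < q) (hrs : r < s) :
    ∫ Z, frobInner (scoreG f Z) (Ebasis p q) * frobInner (scoreG f Z) (Ebasis p q) * f Z ∂μ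
      = ∫ Z, frobInner (scoreG f Z) (Ebasis r s) * frobInner (scoreG f Z) (Ebasis r s) * f Z ∂μ := by
  set τ := Equiv.swap p r with hτ
  set σ := τ.trans (Equiv.swap (τ q) s) with hσ
  have hσp : σ p = r := by
    have h1 : τ p = r := Equiv.swap_apply_left p r
    have h2 : τ q ≠ r := by
      intro h
      have := (Equiv.injective τ) (h.trans h1.symm)
      exact hpq.ne this.symm
    simp only [hσ, Equiv.trans_apply, h1]
    exact Equiv.swap_apply_of_ne_of_ne (Ne.symm h2) hrs.ne
  have hσq : σ q = s := by
    simp only [hσ, Equiv.trans_apply]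
    exact Equiv.swap_apply_left (τ q) s
  have hperm := permMat_conj_Ebasis σ p q
  rw [hσp, hσq] at hperm
  conv_lhs => rw [← hperm]
  rw [T_conj' hμ hf hpos hspec (permMat_mem_ON σ) (Ebasis r s) (Ebasis r s)]

theorem stmt5 {n : ℕ} (hn : 2 ≤ n) (μ : Measure (Matrix (Fin n) (Fin n) ℝ))
    (hμ : IsHaarSO n μ) (f : Matrix (Fin n) (Fin n) ℝ → ℝ)
    (hf : ContDiff ℝ 1 f) (hpos : ∀ Z, 0 < f Z)
    (hspec : ∀ Q ∈ ON n, ∀ Z, f (Q * Z * Qᵀ) = f Z)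
    (hnorm : ∫ Z, f Z ∂μ = 1)
    (R : Matrix (Fin n) (Fin n) ℝ) (hR : R ∈ SO n)
    (p q r s : Fin n) (hpq : p < q) (hrs : r < s) :
    ∫ Z, hFun f R p q Z * hFun f R r s Z * f Z ∂μ =
      if (p, q) = (r, s) then
        ((n * (n - 1) / 2 : ℕ) : ℝ)⁻¹ * ∫ Z, frobInner (scoreG f Z) (scoreG f Z) * f Z ∂μ
      else 0 := by
  have hRON : R ∈ ON n := hR.1
  simp only [hFun]
  rw [T_conj' hμ hf hpos hspec hRON (Ebasis p q) (Ebasis r s)]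
  by_cases h : (p, q) = (r, s)
  · rw [if_pos h]
    injection h with hp' hq'
    subst hp'; subst hq'
    set pairs := Finset.univ.filter (fun x : Fin n × Fin n => x.1 < x.2) with hpairs
    have hint : ∀ A B : Matrix (Fin n) (Fin n) ℝ,
        Integrable (fun Z => frobInner (scoreG f Z) A * frobInner (scoreG f Z) B * f Z) μ :=
      fun A B => integrable_of_continuous hμ (cont_integrand hf hpos A B)
    have hsum : ∑ x ∈ pairs, ∫ Z, frobInner (scoreG f Z) (Ebasis x.1 x.2)
          * frobInner (scoreG f Z) (Ebasis x.1 x.2) * f Z ∂μ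
        = ∫ Z, frobInner (scoreG f Z) (scoreG f Z) * f Z ∂μ := by
      rw [← integral_finset_sum pairs (fun x _ => hint _ _)]
      refine integral_congr_ae (Filter.Eventually.of_forall fun Z => ?_)
      simp only
      rw [← Finset.sum_mul]
      congr 1
      exact sum_sq_frobInner_Ebasis (S := scoreG f Z) (scoreG_skew f Z)
    have hconst : ∀ x ∈ pairs, (∫ Z, frobInner (scoreG f Z) (Ebasis x.1 x.2)
          * frobInner (scoreG f Z) (Ebasis x.1 x.2) * f Z ∂μ)
        = ∫ Z, frobInner (scoreG f Z) (Ebasis p q)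
          * frobInner (scoreG f Z) (Ebasis p q) * f Z ∂μ := by
      intro x hx
      have hx' : x.1 < x.2 := by
        rw [hpairs] at hx
        simpa using (Finset.mem_filter.1 hx).2
      exact T_diag_eq hμ hf hpos hspec hx' hpq
    rw [Finset.sum_congr rfl hconst, Finset.sum_const, card_pairs, nsmul_eq_mul] at hsum
    have hd : ((n * (n - 1) / 2 : ℕ) : ℝ) ≠ 0 := by
      have h2 : 2 * 1 ≤ n * (n - 1) := Nat.mul_le_mul hn (by omega)
      exact Nat.cast_ne_zero.mpr (by omega)
    rw [← hsum, inv_mul_cancel_left₀ hd]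
  · rw [if_neg h]
    exact T_offdiag hμ hf hpos hspec hpq hrs h
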